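/- The function f(p) = (2E(p) - K(p))/sqrt(1 - 2p^2) is strictly monotonically increasing on the interval (0, 1/√2), where K and E are the complete elliptic integrals of the first and second kind. -/

import Mathlib

open Real

/-- Complete elliptic integral of the first kind with modulus `p`. -/
noncomputable def ellK (p : ℝ) : ℝ :=
  ∫ θ in (0:ℝ)..(π/2), 1 / Real.sqrt (1 - p^2 * Real.sin θ ^ 2)

/-- Complete elliptic integral of the second kind with modulus `p`. -/
noncomputable def ellE (p : ℝ) : ℝ :=
  ∫ θ in (0:ℝ)..(π/2), Real.sqrt (1 - p^2 * Real.sin θ ^ 2)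

/-- The function `f(p) = (2E(p) - K(p))/√(1 - 2p²)`. -/
noncomputable def fElastic (p : ℝ) : ℝ :=
  (2 * ellE p - ellK p) / Real.sqrt (1 - 2 * p^2)



noncomputable def TT (x u : ℝ) : ℝ := (1-2*x*u)/Real.sqrt ((1-2*x)*(1-x*u))
noncomputable def vv (x u : ℝ) : ℝ := (1-2*x)*(1-x*u)
noncomputable def DD (x u : ℝ) : ℝ := (2-3*u+2*x*u^2)/(2*vv x u*Real.sqrt (vv x u))

lemma vv_pos {x u : ℝ} (hx0 : 0 < x) (hx : x < 1/2) (hu0 : 0 ≤ u) (hu1 : u ≤ 1) :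
    0 < vv x u := by
  have h1 : 0 < 1-2*x := by linarith
  have h2 : 0 < 1-x*u := by nlinarith
  exact mul_pos h1 h2

lemma hasDerivAt_TT {u : ℝ} (hu0 : 0 ≤ u) (hu1 : u ≤ 1) {x : ℝ} (hx0 : 0 < x) (hx : x < 1/2) :
    HasDerivAt (fun y => TT y u) (DD x u) x := by
  have hv : 0 < vv x u := vv_pos hx0 hx hu0 hu1
  have hv' : HasDerivAt (fun y : ℝ => (1-2*y)*(1-y*u)) ((-2)*(1-x*u)+(1-2*x)*(-u)) x := by
    have h1 : HasDerivAt (fun y : ℝ => 1-2*y) (-2) x := by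
      simpa using ((hasDerivAt_id x).const_mul (2:ℝ)).const_sub 1
    have h2 : HasDerivAt (fun y : ℝ => 1-y*u) (-u) x := by
      simpa using ((hasDerivAt_id x).mul_const u).const_sub 1
    exact h1.mul h2
  have hs := hv'.sqrt (ne_of_gt hv)
  have hnum : HasDerivAt (fun y : ℝ => 1-2*y*u) (-(2*u)) x := by
    simpa [mul_assoc] using (((hasDerivAt_id x).const_mul (2:ℝ)).mul_const u).const_sub 1
  have hsx : Real.sqrt ((1-2*x)*(1-x*u)) ≠ 0 := by
    rw [show (1-2*x)*(1-x*u) = vv x u from rfl]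
    positivity
  have : HasDerivAt (fun y => TT y u) _ x := hnum.div hs hsx
  convert this using 1
  have hss : Real.sqrt ((1-2*x)*(1-x*u)) * Real.sqrt ((1-2*x)*(1-x*u)) = (1-2*x)*(1-x*u) :=
    Real.mul_self_sqrt hv.le
  have hvne : (1-2*x)*(1-x*u) ≠ 0 := ne_of_gt hv
  rw [DD, vv]
  generalize Real.sqrt ((1-2*x)*(1-x*u)) = S at *
  field_simp
  rw [div_eq_iff (by rw [mul_comm u x]; exact hvne)]
  linear_combination ((2-3*u+2*x*u^2) + 4*u*((1-2*x)*(1-x*u))) * hss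

lemma core_ineq {x t : ℝ} (hx0 : 0 ≤ x) (hx : x ≤ 1/2) (ht0 : 0 ≤ t) (ht : t ≤ 1) :
    0 < (2-3*t+2*x*t^2)*(1-x*(1-t))^2 + (-1+3*t+2*x*(1-t)^2)*(1-x*t)^2 := by
  have h1 : 0 ≤ x*(t*(1-t)) := mul_nonneg hx0 (mul_nonneg ht0 (by linarith))
  nlinarith [mul_nonneg h1 (by linarith : (0:ℝ) ≤ 8-11*x), mul_nonneg hx0 (sq_nonneg (x*t*(1-t))), sq_nonneg (x-1/2)]

lemma DD_pos_aux {x t : ℝ} (hx0 : 0 < x) (hx : x < 1/2) (ht0 : 0 ≤ t) (ht : t ≤ 1/2) :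
    0 < DD x t + DD x (1-t) := by
  have ht1 : t ≤ 1 := by linarith
  have ha : 0 < vv x t := vv_pos hx0 hx ht0 ht1
  have hb : 0 < vv x (1-t) := vv_pos hx0 hx (by linarith) (by linarith)
  have hba : vv x (1-t) ≤ vv x t := by
    rw [vv, vv]
    have : x*t ≤ x*(1-t) := by nlinarith
    nlinarith
  set a := vv x t with ha_def
  set b := vv x (1-t) with hb_def
  set sa := Real.sqrt a with hsa_def
  set sb := Real.sqrt b with hsb_def
  have hsa : 0 < sa := Real.sqrt_pos.2 ha
  have hsb : 0 < sb := Real.sqrt_pos.2 hb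
  have hsaa : sa * sa = a := Real.mul_self_sqrt ha.le
  have hsbb : sb * sb = b := Real.mul_self_sqrt hb.le
  -- key : sb * sa ≥ b
  have hkey : b ≤ sb * sa := by
    calc b = Real.sqrt (b*b) := by rw [Real.sqrt_mul_self hb.le]
    _ ≤ Real.sqrt (b*a) := Real.sqrt_le_sqrt (by nlinarith)
    _ = sb * sa := Real.sqrt_mul hb.le a
  have hA : 0 < 2-3*t+2*x*t^2 := by nlinarith
  set A := 2-3*t+2*x*t^2 with hA_def
  set B := 2-3*(1-t)+2*x*(1-t)^2 with hB_def
  -- core: 0 < A*b^2 + B*a^2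
  have hcore : 0 < A*b^2 + B*a^2 := by
    have h := core_ineq hx0.le hx.le ht0 ht1
    have hab2 : A*b^2 + B*a^2 = (1-2*x)^2 * ((2-3*t+2*x*t^2)*(1-x*(1-t))^2 + (-1+3*t+2*x*(1-t)^2)*(1-x*t)^2) := by
      rw [hA_def, hB_def, ha_def, hb_def, vv, vv]; ring
    rw [hab2]
    have h2x : (0:ℝ) < 1-2*x := by linarith
    positivity
  -- A*(b*sb) + B*(a*sa) ≥ (A*b^2 + B*a^2)/sa
  have hstep : (A*b^2 + B*a^2)/sa ≤ A*(b*sb) + B*(a*sa) := by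
    have h1 : A*(b^2/sa) ≤ A*(b*sb) := by
      apply mul_le_mul_of_nonneg_left _ hA.le
      rw [div_le_iff₀ hsa]
      nlinarith
    have h2 : B*(a^2/sa) = B*(a*sa) := by
      rw [mul_eq_mul_left_iff]
      left
      rw [div_eq_iff (ne_of_gt hsa)]
      nlinarith
    calc (A*b^2 + B*a^2)/sa = A*(b^2/sa) + B*(a^2/sa) := by ring
    _ ≤ A*(b*sb) + B*(a*sa) := by rw [h2]; linarith
  have hsum : 0 < A*(b*sb) + B*(a*sa) := lt_of_lt_of_le (div_pos hcore hsa) hstep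
  have hrw : DD x t + DD x (1-t) = (A*(b*sb) + B*(a*sa))/(2*(a*sa)*(b*sb)) := by
    rw [DD, DD, ← hA_def, ← hB_def, ← ha_def, ← hb_def, ← hsa_def, ← hsb_def]
    field_simp
  rw [hrw]
  positivity

lemma DD_pos {x t : ℝ} (hx0 : 0 < x) (hx : x < 1/2) (ht0 : 0 ≤ t) (ht : t ≤ 1) :
    0 < DD x t + DD x (1-t) := by
  rcases le_total t (1/2) with h | h
  · exact DD_pos_aux hx0 hx ht0 h
  · have := DD_pos_aux hx0 hx (t := 1-t) (by linarith) (by linarith)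
    rw [sub_sub_cancel] at this
    linarith

lemma TT_strictMono {t : ℝ} (ht0 : 0 ≤ t) (ht1 : t ≤ 1) :
    StrictMonoOn (fun x => TT x t + TT x (1-t)) (Set.Ioo 0 (1/2)) := by
  apply strictMonoOn_of_deriv_pos (convex_Ioo 0 (1/2))
  · intro x hx
    simp only [Set.mem_Ioo] at hx
    exact ((hasDerivAt_TT ht0 ht1 hx.1 hx.2).add
      (hasDerivAt_TT (by linarith) (by linarith) hx.1 hx.2)).continuousAt.continuousWithinAt
  · intro x hx
    rw [interior_Ioo] at hx
    simp only [Set.mem_Ioo] at hx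
    rw [HasDerivAt.deriv (f := fun x => TT x t + TT x (1-t)) ((hasDerivAt_TT ht0 ht1 hx.1 hx.2).add
      (hasDerivAt_TT (by linarith) (by linarith) hx.1 hx.2))]
    exact DD_pos hx.1 hx.2 ht0 ht1

lemma sq_mem {p : ℝ} (hp : p ∈ Set.Ioo 0 (1 / Real.sqrt 2)) : 0 < p^2 ∧ p^2 < 1/2 := by
  obtain ⟨h1, h2⟩ := hp
  constructor
  · positivity
  · have h3 : p^2 < (1 / Real.sqrt 2)^2 := by
      apply pow_lt_pow_left₀ h2 h1.le
      norm_num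
    rwa [div_pow, one_pow, Real.sq_sqrt (by norm_num : (2:ℝ) ≥ 0)] at h3

lemma fElastic_eq {p : ℝ} (hp : p ∈ Set.Ioo 0 (1 / Real.sqrt 2)) :
    fElastic p = ∫ θ in (0:ℝ)..(π/2), TT (p^2) (Real.sin θ ^ 2) := by
  obtain ⟨hx0, hx⟩ := sq_mem hp
  have ha : ∀ θ : ℝ, 0 < 1 - p^2 * Real.sin θ ^ 2 := fun θ => by
    nlinarith [Real.sin_sq_le_one θ, sq_nonneg (Real.sin θ)]
  have hc0 : Continuous fun θ : ℝ => 1 - p^2 * Real.sin θ ^ 2 := by continuity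
  have hc1 : Continuous fun θ : ℝ => Real.sqrt (1 - p^2 * Real.sin θ ^ 2) := hc0.sqrt
  have hc2 : Continuous fun θ : ℝ => 1 / Real.sqrt (1 - p^2 * Real.sin θ ^ 2) :=
    continuous_const.div hc1 fun θ => ne_of_gt (Real.sqrt_pos.2 (ha θ))
  have h2x : (0:ℝ) < 1 - 2*p^2 := by linarith
  rw [fElastic, ellE, ellK, ← intervalIntegral.integral_const_mul,
    ← intervalIntegral.integral_sub (f := fun θ : ℝ => 2 * Real.sqrt (1 - p^2 * Real.sin θ ^ 2)) ((continuous_const.mul hc1).intervalIntegrable _ _)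
      (hc2.intervalIntegrable _ _), ← intervalIntegral.integral_div]
  apply intervalIntegral.integral_congr
  intro θ _
  have haθ := ha θ
  have hsa : Real.sqrt (1 - p^2 * Real.sin θ ^ 2) ≠ 0 := ne_of_gt (Real.sqrt_pos.2 haθ)
  have hsc : Real.sqrt (1 - 2*p^2) ≠ 0 := ne_of_gt (Real.sqrt_pos.2 h2x)
  have hss : Real.sqrt (1 - p^2 * Real.sin θ ^ 2) * Real.sqrt (1 - p^2 * Real.sin θ ^ 2)
      = 1 - p^2 * Real.sin θ ^ 2 := Real.mul_self_sqrt haθ.le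
  show _ = TT (p^2) (Real.sin θ ^ 2)
  rw [TT, show (1 - 2*p^2) = 1 - 2 * p^2 from rfl, Real.sqrt_mul (by linarith : (0:ℝ) ≤ 1 - 2*p^2)]
  rw [div_eq_div_iff (by positivity) (by positivity)]
  field_simp
  linear_combination 2 * hss

lemma symm_eq (x : ℝ) : (∫ θ in (0:ℝ)..(π/2), TT x (Real.sin θ ^ 2))
    = ∫ θ in (0:ℝ)..(π/2), TT x (1 - Real.sin θ ^ 2) := by
  have h := intervalIntegral.integral_comp_sub_left (a := (0:ℝ)) (b := π/2)
    (fun θ => TT x (Real.sin θ ^ 2)) (π/2)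
  simp only [sub_self, sub_zero] at h
  rw [← h]
  apply intervalIntegral.integral_congr
  intro θ _
  simp [Real.sin_pi_div_two_sub, Real.cos_sq']

lemma cont_TT {x : ℝ} (hx0 : 0 < x) (hx : x < 1/2) {u : ℝ → ℝ} (hu : Continuous u)
    (hu0 : ∀ θ, 0 ≤ u θ) (hu1 : ∀ θ, u θ ≤ 1) : Continuous fun θ => TT x (u θ) := by
  simp only [TT]
  apply Continuous.div (by continuity) (Continuous.sqrt (by continuity))
  intro θ
  exact ne_of_gt (Real.sqrt_pos.2 (vv_pos hx0 hx (hu0 θ) (hu1 θ)))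

theorem fElastic_strictMonoOn :
    StrictMonoOn fElastic (Set.Ioo 0 (1 / Real.sqrt 2)) := by
  intro p₁ hp₁ p₂ hp₂ h12
  obtain ⟨hx₁, hx₁'⟩ := sq_mem hp₁
  obtain ⟨hx₂, hx₂'⟩ := sq_mem hp₂
  have hxx : p₁^2 < p₂^2 := by nlinarith [hp₁.1, hp₂.1]
  have hsin0 : ∀ θ : ℝ, 0 ≤ Real.sin θ ^ 2 := fun θ => sq_nonneg _
  have hsin1 : ∀ θ : ℝ, Real.sin θ ^ 2 ≤ 1 := fun θ => Real.sin_sq_le_one θ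
  have hcont : ∀ x : ℝ, 0 < x → x < 1/2 →
      Continuous fun θ => TT x (Real.sin θ ^ 2) + TT x (1 - Real.sin θ ^ 2) := by
    intro x h0 h1
    exact (cont_TT h0 h1 (by continuity) hsin0 hsin1).add
      (cont_TT h0 h1 (by continuity) (fun θ => by linarith [hsin1 θ]) (fun θ => by linarith [hsin0 θ]))
  have key : (∫ θ in (0:ℝ)..(π/2), (TT (p₁^2) (Real.sin θ ^ 2) + TT (p₁^2) (1 - Real.sin θ ^ 2)))
      < ∫ θ in (0:ℝ)..(π/2), (TT (p₂^2) (Real.sin θ ^ 2) + TT (p₂^2) (1 - Real.sin θ ^ 2)) := by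
    apply intervalIntegral.integral_lt_integral_of_continuousOn_of_le_of_exists_lt
      (by positivity : (0:ℝ) < π/2)
      ((hcont _ hx₁ hx₁').continuousOn) ((hcont _ hx₂ hx₂').continuousOn)
    · intro θ _
      exact (TT_strictMono (hsin0 θ) (hsin1 θ) ⟨hx₁, hx₁'⟩ ⟨hx₂, hx₂'⟩ hxx).le
    · exact ⟨0, ⟨le_refl 0, by positivity⟩,
        TT_strictMono (hsin0 0) (hsin1 0) ⟨hx₁, hx₁'⟩ ⟨hx₂, hx₂'⟩ hxx⟩
  have hdouble : ∀ p : ℝ, p ∈ Set.Ioo 0 (1 / Real.sqrt 2) →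
      2 * fElastic p = ∫ θ in (0:ℝ)..(π/2),
        (TT (p^2) (Real.sin θ ^ 2) + TT (p^2) (1 - Real.sin θ ^ 2)) := by
    intro p hp
    obtain ⟨h0, h1⟩ := sq_mem hp
    rw [intervalIntegral.integral_add
      ((cont_TT h0 h1 (by continuity) hsin0 hsin1).intervalIntegrable _ _)
      ((cont_TT h0 h1 (by continuity) (fun θ => by linarith [hsin1 θ])
        (fun θ => by linarith [hsin0 θ])).intervalIntegrable _ _)]
    rw [← symm_eq, ← fElastic_eq hp]
    ring
  have h1 := hdouble p₁ hp₁
  have h2 := hdouble p₂ hp₂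
  linarith
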